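/- Proposition 1 (equality of modal contributions for conjugate eigenvalues): suppose A is Hurwitz and there is a permutation σ of {1,…,n} such that for every i: λ_{σ(i)} = conj(λ_i), u_{σ(i)} = conj(u_i) (entrywise), and v_{σ(i)} = conj(v_i) (entrywise). For each i define P̄_{z i} := −{ ∑_{j=1}^n ((u_iᴴ u_j)/(conj(λ_i) + λ_j)) e_i e_jᵀ }_H. Then for every real vector x ∈ ℝⁿ, with z := V x (viewing x as a complex vector with real entries), one has zᴴ P̄_{z σ(i)} z = zᴴ P̄_{z i} z for every i. -/

import Mathlib

open Matrix BigOperators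

/-- The Hermitian part `{M}_H = ½(M + Mᴴ)` of a square complex matrix. -/
noncomputable def hermPart {n : ℕ} (M : Matrix (Fin n) (Fin n) ℂ) :
    Matrix (Fin n) (Fin n) ℂ :=
  (1 / 2 : ℂ) • (M + Mᴴ)

/-- The modal-contribution matrix
`P̄_{z i} := −{ ∑_j ((u_iᴴ u_j)/(conj(λ_i) + λ_j)) e_i e_jᵀ }_H`. -/
noncomputable def modalContrib {n : ℕ} (U : Matrix (Fin n) (Fin n) ℂ) (lam : Fin n → ℂ)
    (i : Fin n) : Matrix (Fin n) (Fin n) ℂ :=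
  -hermPart (∑ j, Matrix.single i j
    ((∑ k, starRingEnd ℂ (U k i) * U k j) / (starRingEnd ℂ (lam i) + lam j)))

/-- Proposition 1: equality of modal contributions for conjugate eigenvalues. If `A` is
Hurwitz and `σ` is a permutation with `λ_{σ(i)} = conj(λ_i)`, `u_{σ(i)} = conj(u_i)`,
`v_{σ(i)} = conj(v_i)`, then for every real vector `x`, with `z := V x`,
`zᴴ P̄_{z σ(i)} z = zᴴ P̄_{z i} z` for every `i`. -/
lemma quad_form {n : ℕ} (U : Matrix (Fin n) (Fin n) ℂ) (lam : Fin n → ℂ)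
    (z : Fin n → ℂ) (i : Fin n) :
    dotProduct (star z) ((modalContrib U lam i).mulVec z)
      = -(1/2 : ℂ) *
        ((starRingEnd ℂ (z i) * ∑ j, ((∑ k, starRingEnd ℂ (U k i) * U k j) /
            (starRingEnd ℂ (lam i) + lam j)) * z j)
         + starRingEnd ℂ (starRingEnd ℂ (z i) * ∑ j, ((∑ k, starRingEnd ℂ (U k i) * U k j) /
            (starRingEnd ℂ (lam i) + lam j)) * z j)) := by
  simp only [modalContrib, hermPart, dotProduct, Matrix.mulVec, Matrix.neg_apply,
    Matrix.smul_apply, Matrix.add_apply, Matrix.conjTranspose_apply, Matrix.sum_apply,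
    Matrix.single, Matrix.of_apply, Pi.star_apply]
  have h1 : ∀ (f : Fin n → ℂ) (x x1 : Fin n),
      (∑ x2, if i = x ∧ x2 = x1 then f x2 else 0) = if i = x then f x1 else 0 := by
    intro f x x1; by_cases h : i = x <;> simp [h]
  simp only [ite_and] at *
  simp only [h1]
  simp [Complex.star_def, mul_add, add_mul, Finset.mul_sum, Finset.sum_add_distrib,
    apply_ite (starRingEnd ℂ), mul_ite, ite_mul, mul_zero, zero_mul, Finset.sum_ite_eq,
    Finset.sum_ite_eq', map_zero, _root_.map_mul, map_sum, map_div₀, mul_comm, mul_left_comm]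
  simp only [div_eq_mul_inv]; ring

theorem modal_contributions_conjugate_pair_equal
    (n : ℕ) (hn : 1 ≤ n)
    (A U V : Matrix (Fin n) (Fin n) ℂ) (lam : Fin n → ℂ)
    (hUV : U * V = 1) (hVU : V * U = 1)
    (hA : A = U * Matrix.diagonal lam * V)
    (hHur : ∀ i, (lam i).re < 0)
    (σ : Equiv.Perm (Fin n))
    (hσlam : ∀ i, lam (σ i) = starRingEnd ℂ (lam i))
    (hσU : ∀ i k, U k (σ i) = starRingEnd ℂ (U k i))
    (hσV : ∀ i k, V (σ i) k = starRingEnd ℂ (V i k)) :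
    ∀ (x : Fin n → ℝ) (i : Fin n),
      dotProduct (star (V.mulVec fun k => (x k : ℂ)))
          ((modalContrib U lam (σ i)).mulVec (V.mulVec fun k => (x k : ℂ))) =
        dotProduct (star (V.mulVec fun k => (x k : ℂ)))
          ((modalContrib U lam i).mulVec (V.mulVec fun k => (x k : ℂ))) := by
  intro x i
  set z : Fin n → ℂ := V.mulVec fun k => (x k : ℂ) with hzdef
  have hzσ : ∀ j, z (σ j) = starRingEnd ℂ (z j) := by
    intro j
    simp [hzdef, Matrix.mulVec, dotProduct, map_sum, _root_.map_mul, hσV,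
      Complex.conj_ofReal]
  rw [quad_form, quad_form]
  set F : Fin n → ℂ := fun i =>
    starRingEnd ℂ (z i) * ∑ j, ((∑ k, starRingEnd ℂ (U k i) * U k j) /
      (starRingEnd ℂ (lam i) + lam j)) * z j with hF
  have key : F (σ i) = starRingEnd ℂ (F i) := by
    have hsum : (∑ j, ((∑ k, starRingEnd ℂ (U k (σ i)) * U k j) /
        (starRingEnd ℂ (lam (σ i)) + lam j)) * z j)
        = ∑ j, starRingEnd ℂ (((∑ k, starRingEnd ℂ (U k i) * U k j) /
            (starRingEnd ℂ (lam i) + lam j)) * z j) := by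
      rw [← Equiv.sum_comp σ (fun j => ((∑ k, starRingEnd ℂ (U k (σ i)) * U k j) /
        (starRingEnd ℂ (lam (σ i)) + lam j)) * z j)]
      refine Finset.sum_congr rfl fun j _ => ?_
      simp [hσU, hσlam, hzσ, map_div₀, _root_.map_mul, map_sum, map_add,
        Complex.conj_conj, mul_comm]
    simp only [hF, hsum, hzσ i, Complex.conj_conj, _root_.map_mul, map_sum]
  simp only [hF] at key
  rw [key, Complex.conj_conj]
  ring
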